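/- Let T : H → H' be a compact linear operator between Hilbert spaces. Among all subspaces V ⊆ H' of dimension at most k, the span Λ_k of the k leading left singular vectors of T minimizes the quantity ‖T - proj_V ∘ T‖, i.e. for every subspace V of dimension ≤ k one has ‖T - proj_{Λ_k} ∘ T‖ ≤ ‖T - proj_V ∘ T‖. -/

import Mathlib

open RealInnerProductSpace

private lemma mem_span_orthogonal'' {E : Type*} [NormedAddCommGroup E] [InnerProductSpace ℝ E]
    {s : Set E} {y : E} (h : ∀ u ∈ s, ⟪u, y⟫ = 0) : y ∈ (Submodule.span ℝ s)ᗮ := by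
  rw [Submodule.mem_orthogonal]
  intro u hu
  induction hu using Submodule.span_induction with
  | mem z hz => exact h z hz
  | zero => simp
  | add a b _ _ ha hb => rw [inner_add_left, ha, hb, add_zero]
  | smul r a _ ha => rw [real_inner_smul_left, ha, mul_zero]

private lemma norm_tsum_le_of_norm_sum_le' {ι E : Type*} [NormedAddCommGroup E] [CompleteSpace E]
    {g : ι → E} (hg : Summable g) {C : ℝ} (h : ∀ s : Finset ι, ‖∑ i ∈ s, g i‖ ≤ C) :
    ‖∑' i, g i‖ ≤ C :=
  le_of_tendsto hg.hasSum.norm (Filter.Eventually.of_forall h)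

/-- Kolmogorov optimality (Schmidt–Eckart–Young–Mirsky): among all subspaces
`V ⊆ H'` of dimension at most `k`, the span `Λ_k` of the `k` leading left
singular vectors of a compact operator `T` minimizes `‖T - proj_V ∘ T‖`. -/
theorem stmt1
    {H H' : Type*} [NormedAddCommGroup H] [InnerProductSpace ℝ H] [CompleteSpace H]
    [NormedAddCommGroup H'] [InnerProductSpace ℝ H'] [CompleteSpace H']
    (T : H →L[ℝ] H') (hT : IsCompactOperator T)
    (e : ℕ → H) (f : ℕ → H') (σ : ℕ → ℝ)
    (he : Orthonormal ℝ e) (hf : Orthonormal ℝ f)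
    (hσ0 : ∀ n, 0 ≤ σ n) (hσmono : Antitone σ)
    (hSVD : ∀ x : H, T x = ∑' n : ℕ, (σ n * ⟪e n, x⟫) • f n)
    (k : ℕ) :
    ∀ (V : Submodule ℝ H') [FiniteDimensional ℝ V], Module.finrank ℝ V ≤ k →
      haveI : FiniteDimensional ℝ (Submodule.span ℝ (f '' Set.Iio k)) :=
        FiniteDimensional.span_of_finite ℝ ((Set.finite_Iio k).image f)
      ‖T - (Submodule.span ℝ (f '' Set.Iio k)).subtypeL ∘L
          Submodule.orthogonalProjectionOnto (Submodule.span ℝ (f '' Set.Iio k)) ∘L T‖ ≤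
        ‖T - V.subtypeL ∘L Submodule.orthogonalProjectionOnto V ∘L T‖ := by
  intro V _ hVk
  haveI : FiniteDimensional ℝ (Submodule.span ℝ (f '' Set.Iio k)) :=
    FiniteDimensional.span_of_finite ℝ ((Set.finite_Iio k).image f)
  show ‖T - (Submodule.span ℝ (f '' Set.Iio k)).subtypeL ∘L
          Submodule.orthogonalProjectionOnto (Submodule.span ℝ (f '' Set.Iio k)) ∘L T‖ ≤
        ‖T - V.subtypeL ∘L Submodule.orthogonalProjectionOnto V ∘L T‖
  -- summability of the SVD series
  have hsum : ∀ x : H, Summable fun n => (σ n * ⟪e n, x⟫) • f n := by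
    intro x
    have key := hf.orthogonalFamily.summable_iff_norm_sq_summable
      (𝕜 := ℝ) (fun n => σ n * ⟪e n, x⟫)
    simp only [LinearIsometry.toSpanSingleton_apply] at key
    rw [key]
    refine Summable.of_nonneg_of_le (fun n => by positivity) (fun n => ?_)
      ((he.inner_products_summable x).mul_left ((σ 0)^2))
    rw [norm_mul, mul_pow]
    refine mul_le_mul_of_nonneg_right ?_ (sq_nonneg _)
    rw [Real.norm_eq_abs, sq_abs]
    exact pow_le_pow_left₀ (hσ0 n) (hσmono (Nat.zero_le n)) 2
  -- inner products of f m with T x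
  have hinner : ∀ (x : H) (m : ℕ), ⟪f m, T x⟫ = σ m * ⟪e m, x⟫ := by
    intro x m
    have horth := orthonormal_iff_ite.mp hf
    have h1 : (innerSL ℝ (f m)) (T x) = ∑' n, (innerSL ℝ (f m)) ((σ n * ⟪e n, x⟫) • f n) := by
      rw [hSVD x]; exact (innerSL ℝ (f m)).map_tsum (hsum x)
    simp only [innerSL_apply_apply] at h1
    rw [h1, tsum_eq_single m]
    · rw [real_inner_smul_right, horth m m, if_pos rfl, mul_one]
    · intro n hn
      rw [real_inner_smul_right, horth m n, if_neg (fun h => hn h.symm), mul_zero]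
  -- the residual of projection onto Λ is the tail of the series
  have htail : ∀ x : H,
      T x - (Submodule.orthogonalProjectionOnto (Submodule.span ℝ (f '' Set.Iio k)) (T x) : H')
      = ∑' n : ↑(↑(Finset.range k) : Set ℕ)ᶜ, (σ (n : ℕ) * ⟪e (n : ℕ), x⟫) • f (n : ℕ) := by
    intro x
    have hproj : (Submodule.orthogonalProjectionOnto (Submodule.span ℝ (f '' Set.Iio k)) (T x) : H')
        = ∑ n ∈ Finset.range k, (σ n * ⟪e n, x⟫) • f n := by
      refine Submodule.eq_starProjection_of_mem_orthogonal ?_ ?_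
      · apply Submodule.sum_mem
        intro n hn
        exact Submodule.smul_mem _ _
          (Submodule.subset_span ⟨n, Finset.mem_range.mp hn, rfl⟩)
      · apply mem_span_orthogonal''
        rintro u ⟨m, hm, rfl⟩
        rw [inner_sub_right, hinner x m,
          hf.inner_right_sum _ (Finset.mem_range.mpr hm), sub_self]
    rw [hproj, sub_eq_iff_eq_add']
    rw [Summable.sum_add_tsum_compl (s := Finset.range k) (hsum x)]
    exact hSVD x
  -- the LHS is at most σ k
  have hL : ‖T - (Submodule.span ℝ (f '' Set.Iio k)).subtypeL ∘L
      Submodule.orthogonalProjectionOnto (Submodule.span ℝ (f '' Set.Iio k)) ∘L T‖ ≤ σ k := by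
    refine ContinuousLinearMap.opNorm_le_bound _ (hσ0 k) fun x => ?_
    have happ : (T - (Submodule.span ℝ (f '' Set.Iio k)).subtypeL ∘L
        Submodule.orthogonalProjectionOnto (Submodule.span ℝ (f '' Set.Iio k)) ∘L T) x
        = T x - (Submodule.orthogonalProjectionOnto (Submodule.span ℝ (f '' Set.Iio k)) (T x) : H') := by
      simp [ContinuousLinearMap.sub_apply, ContinuousLinearMap.comp_apply]
    rw [happ, htail x]
    refine norm_tsum_le_of_norm_sum_le' ((hsum x).subtype _) fun s => ?_
    have hns : ‖∑ i ∈ s, (σ (i:ℕ) * ⟪e (i:ℕ), x⟫) • f (i:ℕ)‖^2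
        = ∑ i ∈ s, ‖σ (i:ℕ) * ⟪e (i:ℕ), x⟫‖^2 := by
      have h2 := (hf.comp _ Subtype.val_injective).orthogonalFamily.norm_sum
        (𝕜 := ℝ) (fun i : ↑(↑(Finset.range k) : Set ℕ)ᶜ => σ (i:ℕ) * ⟪e (i:ℕ), x⟫) s
      simpa [LinearIsometry.toSpanSingleton_apply, Function.comp] using h2
    simp only [Function.comp_apply]
    refine le_of_pow_le_pow_left₀ two_ne_zero (mul_nonneg (hσ0 k) (norm_nonneg x)) ?_
    rw [hns, mul_pow]
    calc ∑ i ∈ s, ‖σ (i:ℕ) * ⟪e (i:ℕ), x⟫‖^2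
        ≤ ∑ i ∈ s, (σ k)^2 * ‖⟪e (i:ℕ), x⟫‖^2 := by
          refine Finset.sum_le_sum fun i _ => ?_
          rw [norm_mul, mul_pow, Real.norm_eq_abs (σ _), sq_abs]
          refine mul_le_mul_of_nonneg_right ?_ (sq_nonneg _)
          refine pow_le_pow_left₀ (hσ0 _) (hσmono ?_) 2
          have h3 := i.2
          simp only [Set.mem_compl_iff, Finset.coe_range, Set.mem_Iio, not_lt] at h3
          exact h3
      _ = (σ k)^2 * ∑ i ∈ s, ‖⟪e (i:ℕ), x⟫‖^2 := by rw [Finset.mul_sum]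
      _ ≤ (σ k)^2 * ‖x‖^2 := by
          refine mul_le_mul_of_nonneg_left ?_ (sq_nonneg _)
          have h4 := Orthonormal.sum_inner_products_le (s := s) x
            (he.comp _ (Subtype.val_injective (p := fun n => n ∈ (↑(Finset.range k) : Set ℕ)ᶜ)))
          simpa [Function.comp] using h4
  -- the RHS is at least σ k
  have hR : σ k ≤ ‖T - V.subtypeL ∘L Submodule.orthogonalProjectionOnto V ∘L T‖ := by
    -- find a nonzero coefficient vector killed by the projection
    set φ : (Fin (k+1) → ℝ) →ₗ[ℝ] V :=
      (Submodule.orthogonalProjectionOnto V).toLinearMap ∘ₗ (T : H →ₗ[ℝ] H') ∘ₗ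
        (Fintype.linearCombination ℝ (fun i : Fin (k+1) => e (i : ℕ))) with hφ
    have hnoninj : ¬ Function.Injective φ := by
      intro hinj
      have h5 := LinearMap.finrank_le_finrank_of_injective hinj
      rw [Module.finrank_fin_fun] at h5
      omega
    obtain ⟨c, hc0, hcker⟩ : ∃ c, c ≠ 0 ∧ φ c = 0 := by
      rw [← LinearMap.ker_eq_bot] at hnoninj
      obtain ⟨c, hc, hc0⟩ := Submodule.exists_mem_ne_zero_of_ne_bot hnoninj
      exact ⟨c, hc0, hc⟩
    set x : H := ∑ i : Fin (k+1), c i • e (i : ℕ) with hx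
    have hex : ∀ n : ℕ, ⟪e n, x⟫ = if h : n < k+1 then c ⟨n, h⟩ else 0 := by
      intro n
      have horthe := orthonormal_iff_ite.mp he
      rw [hx, inner_sum]
      by_cases h : n < k + 1
      · rw [dif_pos h, Finset.sum_eq_single (⟨n, h⟩ : Fin (k+1))]
        · rw [real_inner_smul_right, horthe n n, if_pos rfl, mul_one]
        · intro b _ hb
          rw [real_inner_smul_right, horthe n b, if_neg, mul_zero]
          intro hnb
          exact hb (by ext; simp [← hnb])
        · simp
      · rw [dif_neg h]
        apply Finset.sum_eq_zero
        intro b _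
        rw [real_inner_smul_right, horthe n b, if_neg, mul_zero]
        intro hnb
        exact h (hnb ▸ b.isLt)
    have hTx : T x = ∑ i : Fin (k+1), (σ (i : ℕ) * c i) • f (i : ℕ) := by
      rw [hSVD x, tsum_eq_sum (s := Finset.range (k+1))
        (fun n hn => by
          rw [hex n, dif_neg (by simpa using hn), mul_zero, zero_smul]),
        Finset.sum_range fun n => (σ n * ⟪e n, x⟫) • f n]
      congr 1
      ext i
      rw [hex (i : ℕ), dif_pos i.isLt]
    have hPVTx : (Submodule.orthogonalProjectionOnto V (T x) : H') = 0 := by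
      have : φ c = Submodule.orthogonalProjectionOnto V (T x) := by
        simp only [hφ, LinearMap.comp_apply, ContinuousLinearMap.coe_coe,
          Fintype.linearCombination_apply, hx]
      rw [← this, hcker, ZeroMemClass.coe_zero]
    -- norms
    have hxnorm : ‖x‖^2 = ∑ i : Fin (k+1), ‖c i‖^2 := by
      have h6 := (he.comp (fun i : Fin (k+1) => (i : ℕ))
        Fin.val_injective).orthogonalFamily.norm_sum (𝕜 := ℝ) c Finset.univ
      simpa [LinearIsometry.toSpanSingleton_apply, Function.comp, ← hx] using h6
    have hTxnorm : ‖T x‖^2 = ∑ i : Fin (k+1), ‖σ (i : ℕ) * c i‖^2 := by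
      have h7 := (hf.comp (fun i : Fin (k+1) => (i : ℕ))
        Fin.val_injective).orthogonalFamily.norm_sum
        (𝕜 := ℝ) (fun i => σ (i : ℕ) * c i) Finset.univ
      simpa [LinearIsometry.toSpanSingleton_apply, Function.comp, ← hTx] using h7
    have hxpos : 0 < ‖x‖ := by
      rw [norm_pos_iff]
      intro hx0
      apply hc0
      ext i
      have h8 : ∑ i : Fin (k+1), ‖c i‖^2 = 0 := by rw [← hxnorm, hx0]; simp
      have h9 := (Finset.sum_eq_zero_iff_of_nonneg
        (fun i _ => sq_nonneg ‖c i‖)).mp h8 i (Finset.mem_univ i)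
      simpa using h9
    have hTxge : σ k * ‖x‖ ≤ ‖T x‖ := by
      refine le_of_pow_le_pow_left₀ two_ne_zero (norm_nonneg _) ?_
      rw [mul_pow, hTxnorm, hxnorm, Finset.mul_sum]
      refine Finset.sum_le_sum fun i _ => ?_
      rw [norm_mul, mul_pow, Real.norm_eq_abs (σ _), sq_abs]
      refine mul_le_mul_of_nonneg_right ?_ (sq_nonneg _)
      refine pow_le_pow_left₀ (hσ0 k) (hσmono ?_) 2
      omega
    have happ2 : (T - V.subtypeL ∘L Submodule.orthogonalProjectionOnto V ∘L T) x = T x := by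
      simp [ContinuousLinearMap.sub_apply, ContinuousLinearMap.comp_apply, hPVTx]
    have h10 : σ k * ‖x‖ ≤ ‖T - V.subtypeL ∘L Submodule.orthogonalProjectionOnto V ∘L T‖ * ‖x‖ := by
      calc σ k * ‖x‖ ≤ ‖T x‖ := hTxge
        _ = ‖(T - V.subtypeL ∘L Submodule.orthogonalProjectionOnto V ∘L T) x‖ := by rw [happ2]
        _ ≤ ‖T - V.subtypeL ∘L Submodule.orthogonalProjectionOnto V ∘L T‖ * ‖x‖ :=
          (T - V.subtypeL ∘L Submodule.orthogonalProjectionOnto V ∘L T).le_opNorm x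
    exact le_of_mul_le_mul_right h10 hxpos
  exact hL.trans hR
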